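/- Let Γ ≤ D_{n₁} × D_{n₂} × D_{n₃} be a 2-injective 3-factor subdirect product with nᵢ ∉ {1,2,4} for all i ∈ {1,2,3}. Then Γ is a rotate-or-reflect group. -/

import Mathlib

/-- `Γ ≤ G₁ × G₂ × G₃` is a (3-factor) subdirect product:
the projection to each factor is surjective on `Γ`. -/
def IsSubdirect3 {G₁ G₂ G₃ : Type*} [Group G₁] [Group G₂] [Group G₃]
    (Γ : Subgroup (G₁ × G₂ × G₃)) : Prop :=
  (∀ x : G₁, ∃ g ∈ Γ, g.1 = x) ∧ (∀ x : G₂, ∃ g ∈ Γ, g.2.1 = x) ∧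
    (∀ x : G₃, ∃ g ∈ Γ, g.2.2 = x)

/-- `Γ ≤ G₁ × G₂ × G₃` is 2-injective: for each `i`, the projection of `Γ` onto
the product of the two factors other than `Gᵢ` is injective on `Γ`. -/
def IsTwoInjective3 {G₁ G₂ G₃ : Type*} [Group G₁] [Group G₂] [Group G₃]
    (Γ : Subgroup (G₁ × G₂ × G₃)) : Prop :=
  (∀ g ∈ Γ, ∀ h ∈ Γ, g.2.1 = h.2.1 → g.2.2 = h.2.2 → g = h) ∧
  (∀ g ∈ Γ, ∀ h ∈ Γ, g.1 = h.1 → g.2.2 = h.2.2 → g = h) ∧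
  (∀ g ∈ Γ, ∀ h ∈ Γ, g.1 = h.1 → g.2.1 = h.2.1 → g = h)

open DihedralGroup in
/-- An element of `Dₙ` is a rotation if it lies in the cyclic subgroup of
rotations `{r i}`; the identity counts as a rotation. -/
def IsRotation {n : ℕ} (x : DihedralGroup n) : Prop := ∃ i, x = r i

open DihedralGroup in
/-- An element of `Dₙ` is a reflection if it is of the form `sr i`. -/
def IsReflection {n : ℕ} (x : DihedralGroup n) : Prop := ∃ i, x = sr i

/-- A subgroup of a product of three dihedral groups is a rotate-or-reflect group if every
element is either a rotation in all components or a reflection in all components. -/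
def IsRotateOrReflect3 {n₁ n₂ n₃ : ℕ}
    (Γ : Subgroup (DihedralGroup n₁ × DihedralGroup n₂ × DihedralGroup n₃)) : Prop :=
  ∀ g ∈ Γ, (IsRotation g.1 ∧ IsRotation g.2.1 ∧ IsRotation g.2.2) ∨
    (IsReflection g.1 ∧ IsReflection g.2.1 ∧ IsReflection g.2.2)

/-- A subgroup of a product of two dihedral groups is a rotate-or-reflect group if every
element is either a rotation in both components or a reflection in both components. -/
def IsRotateOrReflect2 {n₁ n₂ : ℕ}
    (Γ : Subgroup (DihedralGroup n₁ × DihedralGroup n₂)) : Prop :=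
  ∀ g ∈ Γ, (IsRotation g.1 ∧ IsRotation g.2) ∨ (IsReflection g.1 ∧ IsReflection g.2)

namespace Aux
open DihedralGroup
variable {n : ℕ}

lemma r_inv' (i : ZMod n) : (r i)⁻¹ = r (-i) := rfl
lemma sr_inv' (i : ZMod n) : (sr i)⁻¹ = sr i := rfl

lemma rot_or_refl (x : DihedralGroup n) : IsRotation x ∨ IsReflection x := by
  cases x with
  | r i => exact Or.inl ⟨i, rfl⟩
  | sr i => exact Or.inr ⟨i, rfl⟩

lemma rot_mul_rot {x y : DihedralGroup n} (hx : IsRotation x) (hy : IsRotation y) :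
    IsRotation (x * y) := by
  obtain ⟨i, rfl⟩ := hx; obtain ⟨j, rfl⟩ := hy; exact ⟨i + j, by simp⟩

lemma rot_mul_refl {x y : DihedralGroup n} (hx : IsRotation x) (hy : IsReflection y) :
    IsReflection (x * y) := by
  obtain ⟨i, rfl⟩ := hx; obtain ⟨j, rfl⟩ := hy; exact ⟨j - i, by simp⟩

lemma refl_mul_rot {x y : DihedralGroup n} (hx : IsReflection x) (hy : IsRotation y) :
    IsReflection (x * y) := by
  obtain ⟨i, rfl⟩ := hx; obtain ⟨j, rfl⟩ := hy; exact ⟨i + j, by simp⟩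

lemma refl_mul_refl {x y : DihedralGroup n} (hx : IsReflection x) (hy : IsReflection y) :
    IsRotation (x * y) := by
  obtain ⟨i, rfl⟩ := hx; obtain ⟨j, rfl⟩ := hy; exact ⟨j - i, by simp⟩

lemma refl_sq {x : DihedralGroup n} (hx : IsReflection x) : x * x = 1 := by
  obtain ⟨i, rfl⟩ := hx; simp [one_def, -r_zero]

lemma comm_isRot {a : DihedralGroup n} (ha : IsRotation a) (x : DihedralGroup n) :
    IsRotation (a * x * a⁻¹ * x⁻¹) := by
  obtain ⟨i, rfl⟩ := ha
  cases x with
  | r j => exact ⟨i + j + -i + -j, by simp [r_inv']⟩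
  | sr j => refine ⟨i + i, ?_⟩
            simp [r_inv', sr_inv']
            ring_nf

lemma comm_rot_one {a u : DihedralGroup n} (ha : IsRotation a) (hu : IsRotation u) :
    a * u * a⁻¹ * u⁻¹ = 1 := by
  obtain ⟨i, rfl⟩ := ha; obtain ⟨j, rfl⟩ := hu
  simp [r_inv', one_def, -r_zero]

lemma refl_comm {c w : DihedralGroup n} (hc : IsReflection c) (hw : IsRotation w) :
    c * w * c⁻¹ * w⁻¹ = w⁻¹ * w⁻¹ := by
  obtain ⟨i, rfl⟩ := hc; obtain ⟨j, rfl⟩ := hw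
  simp [r_inv', sr_inv']

lemma rot_cancel {a x : DihedralGroup n} (ha : IsRotation a) (hx : IsRotation x) :
    x * (a * x * a⁻¹)⁻¹ = 1 := by
  obtain ⟨i, rfl⟩ := ha; obtain ⟨j, rfl⟩ := hx
  simp [r_inv', one_def, -r_zero]

lemma refl_double {b x : DihedralGroup n} (hb : IsReflection b) (hx : IsRotation x) :
    x * (b * x * b⁻¹)⁻¹ = x * x := by
  obtain ⟨i, rfl⟩ := hb; obtain ⟨j, rfl⟩ := hx
  simp [r_inv', sr_inv']

lemma dvd_of_r_eq_one {m : ℕ} (h : (r (m : ZMod n)) = 1) : n ∣ m := by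
  rw [one_def] at h
  simp only [r.injEq] at h
  exact (ZMod.natCast_eq_zero_iff m n).mp h

lemma not_dvd_four {m : ℕ} (hp : 0 < m) (h : m ∉ ({1, 2, 4} : Set ℕ)) (hd : m ∣ 4) : False := by
  have := Nat.le_of_dvd (by norm_num) hd
  interval_cases m <;> (try simp_all) <;> omega

end Aux

section NoWeightOne

open DihedralGroup

variable {n₁ n₂ n₃ : ℕ}
  {Γ : Subgroup (DihedralGroup n₁ × DihedralGroup n₂ × DihedralGroup n₃)}
  {g : DihedralGroup n₁ × DihedralGroup n₂ × DihedralGroup n₃}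

/-- No element of `Γ` has a reflection exactly in coordinate 3. -/
lemma noW1_3 (hp₃ : 0 < n₃) (h₃ : n₃ ∉ ({1, 2, 4} : Set ℕ))
    (hsd : IsSubdirect3 Γ) (h2inj : IsTwoInjective3 Γ) (hg : g ∈ Γ)
    (h1 : IsRotation g.1) (h2 : IsRotation g.2.1) (h3 : IsReflection g.2.2) : False := by
  obtain ⟨δ, hδ, hδ3⟩ := hsd.2.2 (r 1)
  set η := g * δ * g⁻¹ * δ⁻¹ with hηdef
  have hηΓ : η ∈ Γ := mul_mem (mul_mem (mul_mem hg hδ) (inv_mem hg)) (inv_mem hδ)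
  have c1 : η.1 = g.1 * δ.1 * g.1⁻¹ * δ.1⁻¹ := by simp [hηdef]
  have c2 : η.2.1 = g.2.1 * δ.2.1 * g.2.1⁻¹ * δ.2.1⁻¹ := by simp [hηdef]
  have c3 : η.2.2 = g.2.2 * δ.2.2 * g.2.2⁻¹ * δ.2.2⁻¹ := by simp [hηdef]
  have hη1 : IsRotation η.1 := by rw [c1]; exact Aux.comm_isRot h1 _
  have hη2 : IsRotation η.2.1 := by rw [c2]; exact Aux.comm_isRot h2 _
  have hη3 : η.2.2 = r (-1 + -1 : ZMod n₃) := by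
    rw [c3, hδ3, Aux.refl_comm h3 ⟨1, rfl⟩, Aux.r_inv', r_mul_r]
  set θ := g * η * g⁻¹ * η⁻¹ with hθdef
  have hθΓ : θ ∈ Γ := mul_mem (mul_mem (mul_mem hg hηΓ) (inv_mem hg)) (inv_mem hηΓ)
  have d1 : θ.1 = g.1 * η.1 * g.1⁻¹ * η.1⁻¹ := by simp [hθdef]
  have d2 : θ.2.1 = g.2.1 * η.2.1 * g.2.1⁻¹ * η.2.1⁻¹ := by simp [hθdef]
  have d3 : θ.2.2 = g.2.2 * η.2.2 * g.2.2⁻¹ * η.2.2⁻¹ := by simp [hθdef]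
  have hθ1 : θ.1 = 1 := by rw [d1]; exact Aux.comm_rot_one h1 hη1
  have hθ2 : θ.2.1 = 1 := by rw [d2]; exact Aux.comm_rot_one h2 hη2
  have hθ3 : θ.2.2 = r ((4 : ℕ) : ZMod n₃) := by
    rw [d3, hη3, Aux.refl_comm h3 ⟨_, rfl⟩, Aux.r_inv', r_mul_r]
    congr 1
    push_cast
    ring
  have heq : θ = 1 := h2inj.2.2 θ hθΓ 1 (one_mem Γ) (by simp [hθ1]) (by simp [hθ2])
  have : r ((4 : ℕ) : ZMod n₃) = 1 := by rw [← hθ3, heq]; simp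
  exact Aux.not_dvd_four hp₃ h₃ (Aux.dvd_of_r_eq_one this)

/-- No element of `Γ` has a reflection exactly in coordinate 2. -/
lemma noW1_2 (hp₂ : 0 < n₂) (h₂ : n₂ ∉ ({1, 2, 4} : Set ℕ))
    (hsd : IsSubdirect3 Γ) (h2inj : IsTwoInjective3 Γ) (hg : g ∈ Γ)
    (h1 : IsRotation g.1) (h2 : IsReflection g.2.1) (h3 : IsRotation g.2.2) : False := by
  obtain ⟨δ, hδ, hδ2⟩ := hsd.2.1 (r 1)
  set η := g * δ * g⁻¹ * δ⁻¹ with hηdef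
  have hηΓ : η ∈ Γ := mul_mem (mul_mem (mul_mem hg hδ) (inv_mem hg)) (inv_mem hδ)
  have c1 : η.1 = g.1 * δ.1 * g.1⁻¹ * δ.1⁻¹ := by simp [hηdef]
  have c2 : η.2.1 = g.2.1 * δ.2.1 * g.2.1⁻¹ * δ.2.1⁻¹ := by simp [hηdef]
  have c3 : η.2.2 = g.2.2 * δ.2.2 * g.2.2⁻¹ * δ.2.2⁻¹ := by simp [hηdef]
  have hη1 : IsRotation η.1 := by rw [c1]; exact Aux.comm_isRot h1 _
  have hη3 : IsRotation η.2.2 := by rw [c3]; exact Aux.comm_isRot h3 _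
  have hη2 : η.2.1 = r (-1 + -1 : ZMod n₂) := by
    rw [c2, hδ2, Aux.refl_comm h2 ⟨1, rfl⟩, Aux.r_inv', r_mul_r]
  set θ := g * η * g⁻¹ * η⁻¹ with hθdef
  have hθΓ : θ ∈ Γ := mul_mem (mul_mem (mul_mem hg hηΓ) (inv_mem hg)) (inv_mem hηΓ)
  have d1 : θ.1 = g.1 * η.1 * g.1⁻¹ * η.1⁻¹ := by simp [hθdef]
  have d2 : θ.2.1 = g.2.1 * η.2.1 * g.2.1⁻¹ * η.2.1⁻¹ := by simp [hθdef]
  have d3 : θ.2.2 = g.2.2 * η.2.2 * g.2.2⁻¹ * η.2.2⁻¹ := by simp [hθdef]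
  have hθ1 : θ.1 = 1 := by rw [d1]; exact Aux.comm_rot_one h1 hη1
  have hθ3 : θ.2.2 = 1 := by rw [d3]; exact Aux.comm_rot_one h3 hη3
  have hθ2 : θ.2.1 = r ((4 : ℕ) : ZMod n₂) := by
    rw [d2, hη2, Aux.refl_comm h2 ⟨_, rfl⟩, Aux.r_inv', r_mul_r]
    congr 1
    push_cast
    ring
  have heq : θ = 1 := h2inj.2.1 θ hθΓ 1 (one_mem Γ) (by simp [hθ1]) (by simp [hθ3])
  have : r ((4 : ℕ) : ZMod n₂) = 1 := by rw [← hθ2, heq]; simp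
  exact Aux.not_dvd_four hp₂ h₂ (Aux.dvd_of_r_eq_one this)

/-- No element of `Γ` has a reflection exactly in coordinate 1. -/
lemma noW1_1 (hp₁ : 0 < n₁) (h₁ : n₁ ∉ ({1, 2, 4} : Set ℕ))
    (hsd : IsSubdirect3 Γ) (h2inj : IsTwoInjective3 Γ) (hg : g ∈ Γ)
    (h1 : IsReflection g.1) (h2 : IsRotation g.2.1) (h3 : IsRotation g.2.2) : False := by
  obtain ⟨δ, hδ, hδ1⟩ := hsd.1 (r 1)
  set η := g * δ * g⁻¹ * δ⁻¹ with hηdef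
  have hηΓ : η ∈ Γ := mul_mem (mul_mem (mul_mem hg hδ) (inv_mem hg)) (inv_mem hδ)
  have c1 : η.1 = g.1 * δ.1 * g.1⁻¹ * δ.1⁻¹ := by simp [hηdef]
  have c2 : η.2.1 = g.2.1 * δ.2.1 * g.2.1⁻¹ * δ.2.1⁻¹ := by simp [hηdef]
  have c3 : η.2.2 = g.2.2 * δ.2.2 * g.2.2⁻¹ * δ.2.2⁻¹ := by simp [hηdef]
  have hη2 : IsRotation η.2.1 := by rw [c2]; exact Aux.comm_isRot h2 _
  have hη3 : IsRotation η.2.2 := by rw [c3]; exact Aux.comm_isRot h3 _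
  have hη1 : η.1 = r (-1 + -1 : ZMod n₁) := by
    rw [c1, hδ1, Aux.refl_comm h1 ⟨1, rfl⟩, Aux.r_inv', r_mul_r]
  set θ := g * η * g⁻¹ * η⁻¹ with hθdef
  have hθΓ : θ ∈ Γ := mul_mem (mul_mem (mul_mem hg hηΓ) (inv_mem hg)) (inv_mem hηΓ)
  have d1 : θ.1 = g.1 * η.1 * g.1⁻¹ * η.1⁻¹ := by simp [hθdef]
  have d2 : θ.2.1 = g.2.1 * η.2.1 * g.2.1⁻¹ * η.2.1⁻¹ := by simp [hθdef]
  have d3 : θ.2.2 = g.2.2 * η.2.2 * g.2.2⁻¹ * η.2.2⁻¹ := by simp [hθdef]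
  have hθ2 : θ.2.1 = 1 := by rw [d2]; exact Aux.comm_rot_one h2 hη2
  have hθ3 : θ.2.2 = 1 := by rw [d3]; exact Aux.comm_rot_one h3 hη3
  have hθ1 : θ.1 = r ((4 : ℕ) : ZMod n₁) := by
    rw [d1, hη1, Aux.refl_comm h1 ⟨_, rfl⟩, Aux.r_inv', r_mul_r]
    congr 1
    push_cast
    ring
  have heq : θ = 1 := h2inj.1 θ hθΓ 1 (one_mem Γ) (by simp [hθ2]) (by simp [hθ3])
  have : r ((4 : ℕ) : ZMod n₁) = 1 := by rw [← hθ1, heq]; simp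
  exact Aux.not_dvd_four hp₁ h₁ (Aux.dvd_of_r_eq_one this)

/-- Final contradiction: `Γ` cannot contain elements of all three mixed
sign patterns (0,1,1), (1,0,1), (1,1,0). -/
lemma final (hp₁ : 0 < n₁) (hp₂ : 0 < n₂) (hp₃ : 0 < n₃)
    (h₁ : n₁ ∉ ({1, 2, 4} : Set ℕ)) (h₂ : n₂ ∉ ({1, 2, 4} : Set ℕ))
    (h₃ : n₃ ∉ ({1, 2, 4} : Set ℕ))
    (hsd : IsSubdirect3 Γ) (h2inj : IsTwoInjective3 Γ)
    {γ₁ γ₂ γ₃ : DihedralGroup n₁ × DihedralGroup n₂ × DihedralGroup n₃}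
    (hγ₁ : γ₁ ∈ Γ) (h11 : IsRotation γ₁.1) (h12 : IsReflection γ₁.2.1)
    (h13 : IsReflection γ₁.2.2)
    (hγ₂ : γ₂ ∈ Γ) (h21 : IsReflection γ₂.1) (h22 : IsRotation γ₂.2.1)
    (h23 : IsReflection γ₂.2.2)
    (hγ₃ : γ₃ ∈ Γ) (h31 : IsReflection γ₃.1) (h32 : IsReflection γ₃.2.1)
    (h33 : IsRotation γ₃.2.2) : False := by
  obtain ⟨g, hgΓ, hg1⟩ := hsd.1 (r 1)
  have hg1rot : IsRotation g.1 := ⟨1, hg1⟩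
  rcases Aux.rot_or_refl g.2.1 with hu | hu
  · rcases Aux.rot_or_refl g.2.2 with hw | hw
    · -- main case : g all rotations
      set A := g * (γ₁ * g * γ₁⁻¹)⁻¹ with hAdef
      set B := g * (γ₂ * g * γ₂⁻¹)⁻¹ with hBdef
      set C := g * (γ₃ * g * γ₃⁻¹)⁻¹ with hCdef
      have hAΓ : A ∈ Γ :=
        mul_mem hgΓ (inv_mem (mul_mem (mul_mem hγ₁ hgΓ) (inv_mem hγ₁)))
      have hBΓ : B ∈ Γ :=
        mul_mem hgΓ (inv_mem (mul_mem (mul_mem hγ₂ hgΓ) (inv_mem hγ₂)))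
      have hCΓ : C ∈ Γ :=
        mul_mem hgΓ (inv_mem (mul_mem (mul_mem hγ₃ hgΓ) (inv_mem hγ₃)))
      have hA1 : A.1 = 1 := by
        have : A.1 = g.1 * (γ₁.1 * g.1 * γ₁.1⁻¹)⁻¹ := by simp [hAdef]
        rw [this]; exact Aux.rot_cancel h11 hg1rot
      have hA2 : A.2.1 = g.2.1 * g.2.1 := by
        have : A.2.1 = g.2.1 * (γ₁.2.1 * g.2.1 * γ₁.2.1⁻¹)⁻¹ := by simp [hAdef]
        rw [this]; exact Aux.refl_double h12 hu
      have hA3 : A.2.2 = g.2.2 * g.2.2 := by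
        have : A.2.2 = g.2.2 * (γ₁.2.2 * g.2.2 * γ₁.2.2⁻¹)⁻¹ := by simp [hAdef]
        rw [this]; exact Aux.refl_double h13 hw
      have hB1 : B.1 = g.1 * g.1 := by
        have : B.1 = g.1 * (γ₂.1 * g.1 * γ₂.1⁻¹)⁻¹ := by simp [hBdef]
        rw [this]; exact Aux.refl_double h21 hg1rot
      have hB2 : B.2.1 = 1 := by
        have : B.2.1 = g.2.1 * (γ₂.2.1 * g.2.1 * γ₂.2.1⁻¹)⁻¹ := by simp [hBdef]
        rw [this]; exact Aux.rot_cancel h22 hu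
      have hB3 : B.2.2 = g.2.2 * g.2.2 := by
        have : B.2.2 = g.2.2 * (γ₂.2.2 * g.2.2 * γ₂.2.2⁻¹)⁻¹ := by simp [hBdef]
        rw [this]; exact Aux.refl_double h23 hw
      have hC1 : C.1 = g.1 * g.1 := by
        have : C.1 = g.1 * (γ₃.1 * g.1 * γ₃.1⁻¹)⁻¹ := by simp [hCdef]
        rw [this]; exact Aux.refl_double h31 hg1rot
      have hC2 : C.2.1 = g.2.1 * g.2.1 := by
        have : C.2.1 = g.2.1 * (γ₃.2.1 * g.2.1 * γ₃.2.1⁻¹)⁻¹ := by simp [hCdef]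
        rw [this]; exact Aux.refl_double h32 hu
      have hC3 : C.2.2 = 1 := by
        have : C.2.2 = g.2.2 * (γ₃.2.2 * g.2.2 * γ₃.2.2⁻¹)⁻¹ := by simp [hCdef]
        rw [this]; exact Aux.rot_cancel h33 hw
      set D := B * A⁻¹ * C with hDdef
      have hDΓ : D ∈ Γ := mul_mem (mul_mem hBΓ (inv_mem hAΓ)) hCΓ
      have hD2 : D.2.1 = 1 := by
        have : D.2.1 = B.2.1 * A.2.1⁻¹ * C.2.1 := by simp [hDdef]
        rw [this, hB2, hA2, hC2]; group
      have hD3 : D.2.2 = 1 := by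
        have : D.2.2 = B.2.2 * A.2.2⁻¹ * C.2.2 := by simp [hDdef]
        rw [this, hB3, hA3, hC3]; group
      have hD1 : D.1 = r ((4 : ℕ) : ZMod n₁) := by
        have : D.1 = B.1 * A.1⁻¹ * C.1 := by simp [hDdef]
        rw [this, hB1, hA1, hC1, hg1]
        simp [Aux.r_inv', one_def, -r_zero]
        congr 1
        push_cast
        ring
      have heq : D = 1 := h2inj.1 D hDΓ 1 (one_mem Γ) (by simp [hD2]) (by simp [hD3])
      have : r ((4 : ℕ) : ZMod n₁) = 1 := by rw [← hD1, heq]; simp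
      exact Aux.not_dvd_four hp₁ h₁ (Aux.dvd_of_r_eq_one this)
    · -- g = (rot, rot, refl) : weight-1, impossible
      exact noW1_3 hp₃ h₃ hsd h2inj hgΓ hg1rot hu hw
  · rcases Aux.rot_or_refl g.2.2 with hw | hw
    · -- g = (rot, refl, rot) : weight-1, impossible
      exact noW1_2 hp₂ h₂ hsd h2inj hgΓ hg1rot hu hw
    · -- g = (rot, refl, refl) : then g² = (r 2, 1, 1)
      have hsqΓ : g * g ∈ Γ := mul_mem hgΓ hgΓ
      have e2 : (g * g).2.1 = 1 := by
        have : (g * g).2.1 = g.2.1 * g.2.1 := by simp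
        rw [this]; exact Aux.refl_sq hu
      have e3 : (g * g).2.2 = 1 := by
        have : (g * g).2.2 = g.2.2 * g.2.2 := by simp
        rw [this]; exact Aux.refl_sq hw
      have e1 : (g * g).1 = r ((2 : ℕ) : ZMod n₁) := by
        have : (g * g).1 = g.1 * g.1 := by simp
        rw [this, hg1, r_mul_r]
        congr 1
        push_cast
        ring
      have heq : g * g = 1 := h2inj.1 (g * g) hsqΓ 1 (one_mem Γ) (by rw [e2]; simp) (by rw [e3]; simp)
      have : r ((2 : ℕ) : ZMod n₁) = 1 := by rw [← e1, heq]; simp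
      exact Aux.not_dvd_four hp₁ h₁ (dvd_trans (Aux.dvd_of_r_eq_one this) (by norm_num))

end NoWeightOne

open DihedralGroup in
theorem statement_5 {n₁ n₂ n₃ : ℕ}
    (hp₁ : 0 < n₁) (hp₂ : 0 < n₂) (hp₃ : 0 < n₃)
    (h₁ : n₁ ∉ ({1, 2, 4} : Set ℕ)) (h₂ : n₂ ∉ ({1, 2, 4} : Set ℕ))
    (h₃ : n₃ ∉ ({1, 2, 4} : Set ℕ))
    (Γ : Subgroup (DihedralGroup n₁ × DihedralGroup n₂ × DihedralGroup n₃))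
    (hsd : IsSubdirect3 Γ) (h2inj : IsTwoInjective3 Γ) :
    IsRotateOrReflect3 Γ := by
  intro g hg
  rcases Aux.rot_or_refl g.1 with a1 | a1 <;>
    rcases Aux.rot_or_refl g.2.1 with a2 | a2 <;>
      rcases Aux.rot_or_refl g.2.2 with a3 | a3
  · exact Or.inl ⟨a1, a2, a3⟩
  · -- (0,0,1)
    exact absurd (noW1_3 hp₃ h₃ hsd h2inj hg a1 a2 a3) id
  · -- (0,1,0)
    exact absurd (noW1_2 hp₂ h₂ hsd h2inj hg a1 a2 a3) id
  · -- (0,1,1) : weight two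
    exfalso
    obtain ⟨g', hg', hg'1⟩ := hsd.1 (sr 0)
    have b1 : IsReflection g'.1 := ⟨0, hg'1⟩
    have m12 : (g * g').1 = g.1 * g'.1 := by simp
    have m22 : (g * g').2.1 = g.2.1 * g'.2.1 := by simp
    have m32 : (g * g').2.2 = g.2.2 * g'.2.2 := by simp
    rcases Aux.rot_or_refl g'.2.1 with b2 | b2 <;> rcases Aux.rot_or_refl g'.2.2 with b3 | b3
    · -- g' = (1,0,0)
      exact noW1_1 hp₁ h₁ hsd h2inj hg' b1 b2 b3
    · -- g' = (1,0,1) ; g*g' = (1,1,0)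
      refine final hp₁ hp₂ hp₃ h₁ h₂ h₃ hsd h2inj hg a1 a2 a3 hg' b1 b2 b3
        (mul_mem hg hg') ?_ ?_ ?_
      · rw [m12]; exact Aux.rot_mul_refl a1 b1
      · rw [m22]; exact Aux.refl_mul_rot a2 b2
      · rw [m32]; exact Aux.refl_mul_refl a3 b3
    · -- g' = (1,1,0) ; g*g' = (1,0,1)
      refine final hp₁ hp₂ hp₃ h₁ h₂ h₃ hsd h2inj hg a1 a2 a3
        (mul_mem hg hg') ?_ ?_ ?_ hg' b1 b2 b3
      · rw [m12]; exact Aux.rot_mul_refl a1 b1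
      · rw [m22]; exact Aux.refl_mul_refl a2 b2
      · rw [m32]; exact Aux.refl_mul_rot a3 b3
    · -- g' = (1,1,1) ; g*g' = (1,0,0)
      refine noW1_1 hp₁ h₁ hsd h2inj (mul_mem hg hg') ?_ ?_ ?_
      · rw [m12]; exact Aux.rot_mul_refl a1 b1
      · rw [m22]; exact Aux.refl_mul_refl a2 b2
      · rw [m32]; exact Aux.refl_mul_refl a3 b3
  · -- (1,0,0)
    exact absurd (noW1_1 hp₁ h₁ hsd h2inj hg a1 a2 a3) id
  · -- (1,0,1) : weight two
    exfalso
    obtain ⟨g', hg', hg'2⟩ := hsd.2.1 (sr 0)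
    have b2 : IsReflection g'.2.1 := ⟨0, hg'2⟩
    have m12 : (g * g').1 = g.1 * g'.1 := by simp
    have m22 : (g * g').2.1 = g.2.1 * g'.2.1 := by simp
    have m32 : (g * g').2.2 = g.2.2 * g'.2.2 := by simp
    rcases Aux.rot_or_refl g'.1 with b1 | b1 <;> rcases Aux.rot_or_refl g'.2.2 with b3 | b3
    · -- g' = (0,1,0)
      exact noW1_2 hp₂ h₂ hsd h2inj hg' b1 b2 b3
    · -- g' = (0,1,1) ; g*g' = (1,1,0)
      refine final hp₁ hp₂ hp₃ h₁ h₂ h₃ hsd h2inj hg' b1 b2 b3 hg a1 a2 a3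
        (mul_mem hg hg') ?_ ?_ ?_
      · rw [m12]; exact Aux.refl_mul_rot a1 b1
      · rw [m22]; exact Aux.rot_mul_refl a2 b2
      · rw [m32]; exact Aux.refl_mul_refl a3 b3
    · -- g' = (1,1,0) ; g*g' = (0,1,1)
      refine final hp₁ hp₂ hp₃ h₁ h₂ h₃ hsd h2inj (mul_mem hg hg') ?_ ?_ ?_
        hg a1 a2 a3 hg' b1 b2 b3
      · rw [m12]; exact Aux.refl_mul_refl a1 b1
      · rw [m22]; exact Aux.rot_mul_refl a2 b2
      · rw [m32]; exact Aux.refl_mul_rot a3 b3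
    · -- g' = (1,1,1) ; g*g' = (0,1,0)
      refine noW1_2 hp₂ h₂ hsd h2inj (mul_mem hg hg') ?_ ?_ ?_
      · rw [m12]; exact Aux.refl_mul_refl a1 b1
      · rw [m22]; exact Aux.rot_mul_refl a2 b2
      · rw [m32]; exact Aux.refl_mul_refl a3 b3
  · -- (1,1,0) : weight two
    exfalso
    obtain ⟨g', hg', hg'3⟩ := hsd.2.2 (sr 0)
    have b3 : IsReflection g'.2.2 := ⟨0, hg'3⟩
    have m12 : (g * g').1 = g.1 * g'.1 := by simp
    have m22 : (g * g').2.1 = g.2.1 * g'.2.1 := by simp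
    have m32 : (g * g').2.2 = g.2.2 * g'.2.2 := by simp
    rcases Aux.rot_or_refl g'.1 with b1 | b1 <;> rcases Aux.rot_or_refl g'.2.1 with b2 | b2
    · -- g' = (0,0,1)
      exact noW1_3 hp₃ h₃ hsd h2inj hg' b1 b2 b3
    · -- g' = (0,1,1) ; g*g' = (1,0,1)
      refine final hp₁ hp₂ hp₃ h₁ h₂ h₃ hsd h2inj hg' b1 b2 b3
        (mul_mem hg hg') ?_ ?_ ?_ hg a1 a2 a3
      · rw [m12]; exact Aux.refl_mul_rot a1 b1
      · rw [m22]; exact Aux.refl_mul_refl a2 b2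
      · rw [m32]; exact Aux.rot_mul_refl a3 b3
    · -- g' = (1,0,1) ; g*g' = (0,1,1)
      refine final hp₁ hp₂ hp₃ h₁ h₂ h₃ hsd h2inj (mul_mem hg hg') ?_ ?_ ?_
        hg' b1 b2 b3 hg a1 a2 a3
      · rw [m12]; exact Aux.refl_mul_refl a1 b1
      · rw [m22]; exact Aux.refl_mul_rot a2 b2
      · rw [m32]; exact Aux.rot_mul_refl a3 b3
    · -- g' = (1,1,1) ; g*g' = (0,0,1)
      refine noW1_3 hp₃ h₃ hsd h2inj (mul_mem hg hg') ?_ ?_ ?_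
      · rw [m12]; exact Aux.refl_mul_refl a1 b1
      · rw [m22]; exact Aux.refl_mul_refl a2 b2
      · rw [m32]; exact Aux.rot_mul_refl a3 b3
  · exact Or.inr ⟨a1, a2, a3⟩
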